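/- Define u : ℝ² → ℝ as follows: for z = (x, y) with r = √(x² + y²), set u(z) = 0 if r ≤ 1/2, and u(z) = (1 − r)(2r − 1)² · ( y·cos(log(2r − 1)) − x·sin(log(2r − 1)) ) / r if r > 1/2 (in polar coordinates z = r·e^{iθ} this is u = (1 − r)(2r − 1)²·sin(θ − log(2r − 1)) for 1/2 < r, and 0 for r ≤ 1/2). Then u is differentiable at every point of the open unit ball B₁(0) ⊆ ℝ², and its derivative (gradient) vanishes at every point of the closed ball of radius 1/2 centered at the origin. -/
import Mathlib

open Metric Set

noncomputable section

abbrev E2 := EuclideanSpace ℝ (Fin 2)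

/-- The spiral example of Alessandrini: in polar coordinates,
`u(r e^{iθ}) = (1 - r)(2r - 1)² sin(θ - log(2r - 1))` for `r > 1/2` and `u = 0` for
`r ≤ 1/2`. -/
def spiral (z : E2) : ℝ :=
  if ‖z‖ ≤ 1 / 2 then 0
  else (1 - ‖z‖) * (2 * ‖z‖ - 1) ^ 2 *
    (z 1 * Real.cos (Real.log (2 * ‖z‖ - 1)) -
      z 0 * Real.sin (Real.log (2 * ‖z‖ - 1))) / ‖z‖

lemma norm_sq_eq' (w : E2) : (w 0)^2 + (w 1)^2 = ‖w‖^2 := by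
  rw [EuclideanSpace.norm_eq, Real.sq_sqrt (by positivity)]
  simp [Fin.sum_univ_two, Real.norm_eq_abs, sq_abs]

lemma cross_bound (w : E2) (t : ℝ) :
    |w 1 * Real.cos t - w 0 * Real.sin t| ≤ ‖w‖ := by
  have h1 := norm_sq_eq' w
  have h2 := Real.sin_sq_add_cos_sq t
  have hn : (0:ℝ) ≤ ‖w‖ := norm_nonneg w
  rw [abs_le]
  constructor <;> nlinarith [sq_nonneg (w 1 * Real.sin t + w 0 * Real.cos t),
    sq_nonneg (w 1 * Real.cos t - w 0 * Real.sin t + ‖w‖),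
    sq_nonneg (w 1 * Real.cos t - w 0 * Real.sin t - ‖w‖)]

lemma spiral_bound {z w : E2} (hz : ‖z‖ = 1/2) (hw : ‖w‖ ≤ 1) :
    |spiral w| ≤ 4 * ‖w - z‖^2 := by
  unfold spiral
  split_ifs with h
  · rw [abs_zero]; positivity
  · push_neg at h
    set r := ‖w‖ with hr
    set t := Real.log (2 * r - 1) with ht
    set A := w 1 * Real.cos t - w 0 * Real.sin t with hA
    have hAr : |A| ≤ r := cross_bound w t
    have hr0 : (0:ℝ) < r := by linarith
    have hwz : 2 * r - 1 ≤ 2 * ‖w - z‖ := by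
      have := norm_sub_norm_le w z
      rw [hz] at this; linarith
    have hnum : |(1 - r) * (2*r - 1)^2 * A| ≤ (2*r - 1)^2 * r := by
      rw [abs_mul, abs_mul]
      have h1 : |1 - r| ≤ 1 := by rw [abs_le]; constructor <;> linarith
      have h2 : |(2*r - 1)^2| = (2*r - 1)^2 := abs_of_nonneg (sq_nonneg _)
      rw [h2]
      calc |1 - r| * (2*r-1)^2 * |A| ≤ 1 * (2*r-1)^2 * r := by
            apply mul_le_mul (mul_le_mul_of_nonneg_right h1 (sq_nonneg _)) hAr
              (abs_nonneg _) (by positivity)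
        _ = (2*r-1)^2 * r := by ring
    rw [abs_div, abs_of_nonneg hr0.le, div_le_iff₀ hr0]
    calc |(1 - r) * (2*r - 1)^2 * A| ≤ (2*r - 1)^2 * r := hnum
      _ ≤ (2 * ‖w - z‖)^2 * r := by
          apply mul_le_mul_of_nonneg_right _ hr0.le
          exact pow_le_pow_left₀ (by linarith) hwz 2
      _ = 4 * ‖w - z‖^2 * r := by ring

lemma spiral_hasFDerivAt_sphere {z : E2} (hz : ‖z‖ = 1/2) :
    HasFDerivAt spiral (0 : E2 →L[ℝ] ℝ) z := by
  rw [hasFDerivAt_iff_isLittleO_nhds_zero]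
  have hz0 : spiral z = 0 := by unfold spiral; rw [if_pos (by rw [hz])]
  simp only [hz0, ContinuousLinearMap.zero_apply, sub_zero, zero_sub, zero_add]
  rw [Asymptotics.isLittleO_iff]
  intro c hc
  filter_upwards [Metric.ball_mem_nhds (0 : E2) (show (0:ℝ) < min (c/4) (1/4) by
    positivity)] with h hh
  rw [Metric.mem_ball, dist_zero_right] at hh
  have hh1 : ‖h‖ < c/4 := lt_of_lt_of_le hh (min_le_left _ _)
  have hh2 : ‖h‖ < 1/4 := lt_of_lt_of_le hh (min_le_right _ _)
  have hw : ‖z + h‖ ≤ 1 := by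
    calc ‖z + h‖ ≤ ‖z‖ + ‖h‖ := norm_add_le _ _
      _ ≤ 1/2 + 1/4 := by rw [hz]; linarith
      _ ≤ 1 := by norm_num
  have := spiral_bound hz hw
  rw [show z + h - z = h by abel] at this
  rw [Real.norm_eq_abs]
  calc |spiral (z + h)| ≤ 4 * ‖h‖^2 := this
    _ = (4 * ‖h‖) * ‖h‖ := by ring
    _ ≤ c * ‖h‖ := by
        apply mul_le_mul_of_nonneg_right _ (norm_nonneg _)
        linarith

lemma spiral_eventually_zero {z : E2} (hz : ‖z‖ < 1/2) :
    spiral =ᶠ[nhds z] fun _ => (0:ℝ) := by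
  have hopen : IsOpen {w : E2 | ‖w‖ < 1/2} := isOpen_lt continuous_norm continuous_const
  filter_upwards [hopen.mem_nhds hz] with w hw
  unfold spiral
  rw [if_pos (le_of_lt hw)]

lemma spiral_hasFDerivAt_inner {z : E2} (hz : ‖z‖ < 1/2) :
    HasFDerivAt spiral (0 : E2 →L[ℝ] ℝ) z :=
  (hasFDerivAt_const (0:ℝ) z).congr_of_eventuallyEq (spiral_eventually_zero hz)

lemma spiral_differentiableAt_outer {z : E2} (hz : 1/2 < ‖z‖) :
    DifferentiableAt ℝ spiral z := by
  have hz0 : z ≠ 0 := by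
    intro h; rw [h, norm_zero] at hz; linarith
  have hn : DifferentiableAt ℝ (fun w : E2 => ‖w‖) z := differentiableAt_id.norm ℝ hz0
  have h1 : DifferentiableAt ℝ (fun w : E2 => 2 * ‖w‖ - 1) z :=
    (hn.const_mul 2).sub_const 1
  have hpos : (0:ℝ) < 2 * ‖z‖ - 1 := by linarith
  have hlog : DifferentiableAt ℝ (fun w : E2 => Real.log (2 * ‖w‖ - 1)) z :=
    h1.log (ne_of_gt hpos)
  have hcos : DifferentiableAt ℝ (fun w : E2 => Real.cos (Real.log (2 * ‖w‖ - 1))) z :=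
    hlog.cos
  have hsin : DifferentiableAt ℝ (fun w : E2 => Real.sin (Real.log (2 * ‖w‖ - 1))) z :=
    hlog.sin
  have hc0 : DifferentiableAt ℝ (fun w : E2 => w 0) z :=
    (EuclideanSpace.proj (0 : Fin 2) : E2 →L[ℝ] ℝ).differentiableAt
  have hc1 : DifferentiableAt ℝ (fun w : E2 => w 1) z :=
    (EuclideanSpace.proj (1 : Fin 2) : E2 →L[ℝ] ℝ).differentiableAt
  have hf : DifferentiableAt ℝ (fun w : E2 =>
      (1 - ‖w‖) * (2 * ‖w‖ - 1) ^ 2 *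
        (w 1 * Real.cos (Real.log (2 * ‖w‖ - 1)) -
          w 0 * Real.sin (Real.log (2 * ‖w‖ - 1))) / ‖w‖) z := by
    have hnum : DifferentiableAt ℝ (fun w : E2 =>
        (1 - ‖w‖) * (2 * ‖w‖ - 1) ^ 2 *
          (w 1 * Real.cos (Real.log (2 * ‖w‖ - 1)) -
            w 0 * Real.sin (Real.log (2 * ‖w‖ - 1)))) z :=
      (((differentiableAt_const 1).sub hn).mul (h1.pow 2)).mul
        ((hc1.mul hcos).sub (hc0.mul hsin))
    have hne : ‖z‖ ≠ 0 := by intro h; rw [h] at hz; linarith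
    simp only [div_eq_mul_inv]
    exact hnum.mul (hn.inv hne)
  apply hf.congr_of_eventuallyEq
  have hopen : IsOpen {w : E2 | 1/2 < ‖w‖} := isOpen_lt continuous_const continuous_norm
  filter_upwards [hopen.mem_nhds hz] with w hw
  unfold spiral
  rw [if_neg (not_le.mpr hw)]

/-- Remark 4.4: the spiral example is differentiable in the open unit ball and its
derivative vanishes on the closed ball of radius `1/2`. -/
theorem spiral_differentiable_gradient_vanishes :
    (∀ z ∈ ball (0 : E2) 1, DifferentiableAt ℝ spiral z) ∧
    (∀ z ∈ closedBall (0 : E2) (1 / 2), fderiv ℝ spiral z = 0) := by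
  constructor
  · intro z hz
    rw [mem_ball_zero_iff] at hz
    rcases lt_trichotomy ‖z‖ (1/2) with h | h | h
    · exact (spiral_hasFDerivAt_inner h).differentiableAt
    · exact (spiral_hasFDerivAt_sphere h).differentiableAt
    · exact spiral_differentiableAt_outer h
  · intro z hz
    rw [mem_closedBall_zero_iff] at hz
    rcases eq_or_lt_of_le hz with h | h
    · exact (spiral_hasFDerivAt_sphere h).fderiv
    · exact (spiral_hasFDerivAt_inner h).fderiv
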